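/- Let G be a graph with vertex set V = {v_1,...,v_n} and let G' be the split graph obtained as follows: G' has vertex set V_1 ∪ V_2 ∪ U_1 ∪ U_2 where V_k = {v_i^k : i ∈ [n]}, U_k = {u_i^k : i ∈ [n]}, the set V_1 ∪ U_1 is a clique, and for each i the vertex v_i^2 is adjacent to v_j^1 (and u_i^2 adjacent to u_j^1) exactly when v_j ∈ N_G[v_i]. Then G has a dominating set of cardinality at most k if and only if G' has a semipaired dominating set of cardinality at most 2k. -/
import Mathlib


open SimpleGraph Finset

/-- `D` is a dominating set of `G`. -/
def Dominating {V : Type*} (G : SimpleGraph V) (D : Finset V) : Prop :=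
  ∀ v : V, ∃ u ∈ D, u = v ∨ G.Adj u v

/-- `D` is a semipaired dominating set of `G`: a dominating set whose vertices can be
partitioned into pairs (via a fixed-point-free involution) at distance at most 2. -/
def SemiPairedDom {V : Type*} (G : SimpleGraph V) (D : Finset V) : Prop :=
  Dominating G D ∧ ∃ f : V → V,
    (∀ u ∈ D, f u ∈ D) ∧ (∀ u ∈ D, f (f u) = u) ∧ (∀ u ∈ D, f u ≠ u) ∧
    (∀ u ∈ D, G.Adj u (f u) ∨ ∃ w, G.Adj u w ∧ G.Adj w (f u))

/-- `D` is a paired dominating set of `G`: a dominating set whose induced subgraph has a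
perfect matching (encoded by a fixed-point-free involution pairing adjacent vertices). -/
def PairedDom {V : Type*} (G : SimpleGraph V) (D : Finset V) : Prop :=
  Dominating G D ∧ ∃ f : V → V,
    (∀ u ∈ D, f u ∈ D) ∧ (∀ u ∈ D, f (f u) = u) ∧ (∀ u ∈ D, f u ≠ u) ∧
    (∀ u ∈ D, G.Adj u (f u))

/-- The domination number. -/
noncomputable def domNum (V : Type*) [Fintype V] (G : SimpleGraph V) : ℕ :=
  sInf {k : ℕ | ∃ D : Finset V, Dominating G D ∧ D.card = k}

/-- The semipaired domination number. -/
noncomputable def semiPairedDomNum (V : Type*) [Fintype V] (G : SimpleGraph V) : ℕ :=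
  sInf {k : ℕ | ∃ D : Finset V, SemiPairedDom G D ∧ D.card = k}

/-- The paired domination number. -/
noncomputable def pairedDomNum (V : Type*) [Fintype V] (G : SimpleGraph V) : ℕ :=
  sInf {k : ℕ | ∃ D : Finset V, PairedDom G D ∧ D.card = k}

/-- The split graph `G'` built from `G`: vertices `Sum.inl (Sum.inl i)` are `v_i^1`,
`Sum.inl (Sum.inr i)` are `u_i^1` (together a clique), `Sum.inr (Sum.inl i)` are `v_i^2`
and `Sum.inr (Sum.inr i)` are `u_i^2` (an independent set), with `v_i^2 v_j^1` and
`u_i^2 u_j^1` edges exactly when `v_j ∈ N_G[v_i]`. -/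
def splitG {α : Type*} (G : SimpleGraph α) : SimpleGraph ((α ⊕ α) ⊕ (α ⊕ α)) :=
  SimpleGraph.fromRel (fun u v =>
    (∃ x y : α ⊕ α, u = Sum.inl x ∧ v = Sum.inl y) ∨
    (∃ i j : α, u = Sum.inr (Sum.inl i) ∧ v = Sum.inl (Sum.inl j) ∧ (i = j ∨ G.Adj i j)) ∨
    (∃ i j : α, u = Sum.inr (Sum.inr i) ∧ v = Sum.inl (Sum.inr j) ∧ (i = j ∨ G.Adj i j)))

lemma clique_adj {α : Type*} (G : SimpleGraph α) {x y : α ⊕ α} (h : x ≠ y) :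
    (splitG G).Adj (Sum.inl x) (Sum.inl y) := by
  rw [splitG, SimpleGraph.fromRel_adj]
  exact ⟨by simpa using h, Or.inl (Or.inl ⟨x, y, rfl, rfl⟩)⟩

lemma v2_adj {α : Type*} (G : SimpleGraph α) {i j : α} (h : i = j ∨ G.Adj i j) :
    (splitG G).Adj (Sum.inl (Sum.inl j)) (Sum.inr (Sum.inl i)) := by
  rw [splitG, SimpleGraph.fromRel_adj]
  exact ⟨by simp, Or.inr (Or.inr (Or.inl ⟨i, j, rfl, rfl, h⟩))⟩

lemma u2_adj {α : Type*} (G : SimpleGraph α) {i j : α} (h : i = j ∨ G.Adj i j) :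
    (splitG G).Adj (Sum.inl (Sum.inr j)) (Sum.inr (Sum.inr i)) := by
  rw [splitG, SimpleGraph.fromRel_adj]
  exact ⟨by simp, Or.inr (Or.inr (Or.inr ⟨i, j, rfl, rfl, h⟩))⟩

lemma adj_v2_elim {α : Type*} (G : SimpleGraph α) {d : (α ⊕ α) ⊕ (α ⊕ α)} {i : α}
    (h : (splitG G).Adj d (Sum.inr (Sum.inl i))) :
    ∃ j, d = Sum.inl (Sum.inl j) ∧ (i = j ∨ G.Adj i j) := by
  rw [splitG, SimpleGraph.fromRel_adj] at h
  obtain ⟨-, h⟩ := h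
  rcases h with (⟨x, y, h1, h2⟩ | ⟨a, b, h1, h2, h3⟩ | ⟨a, b, h1, h2, h3⟩) |
    (⟨x, y, h1, h2⟩ | ⟨a, b, h1, h2, h3⟩ | ⟨a, b, h1, h2, h3⟩) <;>
    simp_all

lemma adj_u2_elim {α : Type*} (G : SimpleGraph α) {d : (α ⊕ α) ⊕ (α ⊕ α)} {i : α}
    (h : (splitG G).Adj d (Sum.inr (Sum.inr i))) :
    ∃ j, d = Sum.inl (Sum.inr j) ∧ (i = j ∨ G.Adj i j) := by
  rw [splitG, SimpleGraph.fromRel_adj] at h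
  obtain ⟨-, h⟩ := h
  rcases h with (⟨x, y, h1, h2⟩ | ⟨a, b, h1, h2, h3⟩ | ⟨a, b, h1, h2, h3⟩) |
    (⟨x, y, h1, h2⟩ | ⟨a, b, h1, h2, h3⟩ | ⟨a, b, h1, h2, h3⟩) <;>
    simp_all

/-- indicator : is a "v"-type vertex -/
def isV {α : Type*} : (α ⊕ α) ⊕ (α ⊕ α) → Bool
  | Sum.inl (Sum.inl _) => true
  | Sum.inr (Sum.inl _) => true
  | _ => false

def projα {α : Type*} : (α ⊕ α) ⊕ (α ⊕ α) → α :=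
  Sum.elim (Sum.elim id id) (Sum.elim id id)


/-- `G` (with at least two vertices) has a dominating set of cardinality at
most `k` iff the split graph `G'` has a semipaired dominating set of cardinality at most
`2k`. -/
theorem splitG_dom_iff_semiPairedDom {α : Type*} [Fintype α] [DecidableEq α]
    (G : SimpleGraph α) (hcard : 1 < Fintype.card α) (k : ℕ) :
    (∃ D : Finset α, Dominating G D ∧ D.card ≤ k) ↔
    (∃ D' : Finset ((α ⊕ α) ⊕ (α ⊕ α)),
      SemiPairedDom (splitG G) D' ∧ D'.card ≤ 2 * k) := by
  classical
  constructor
  · rintro ⟨D, hD, hcardD⟩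
    obtain ⟨v⟩ := Fintype.card_pos_iff.mp (show 0 < Fintype.card α by omega)
    obtain ⟨d₀, hd₀, -⟩ := hD v
    refine ⟨D.image (fun i => Sum.inl (Sum.inl i)) ∪ D.image (fun i => Sum.inl (Sum.inr i)),
      ⟨?_, ?_⟩, ?_⟩
    · rintro (x | (i | i))
      · -- clique vertex
        refine ⟨Sum.inl (Sum.inl d₀), by simp [hd₀], ?_⟩
        by_cases h : (Sum.inl (Sum.inl d₀) : (α ⊕ α) ⊕ (α ⊕ α)) = Sum.inl x
        · exact Or.inl h
        · exact Or.inr (clique_adj G (fun he => h (by simp [he])))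
      · obtain ⟨d, hd, hdi⟩ := hD i
        exact ⟨Sum.inl (Sum.inl d), by simp [hd],
          Or.inr (v2_adj G (hdi.imp (fun h => h.symm) (fun h => h.symm)))⟩
      · obtain ⟨d, hd, hdi⟩ := hD i
        exact ⟨Sum.inl (Sum.inr d), by simp [hd],
          Or.inr (u2_adj G (hdi.imp (fun h => h.symm) (fun h => h.symm)))⟩
    · refine ⟨fun w => match w with
        | Sum.inl (Sum.inl i) => Sum.inl (Sum.inr i)
        | Sum.inl (Sum.inr i) => Sum.inl (Sum.inl i)
        | x => x, ?_, ?_, ?_, ?_⟩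
      · intro u hu
        simp only [mem_union, mem_image] at hu ⊢
        rcases hu with ⟨i, hi, rfl⟩ | ⟨i, hi, rfl⟩
        · exact Or.inr ⟨i, hi, rfl⟩
        · exact Or.inl ⟨i, hi, rfl⟩
      · intro u hu
        simp only [mem_union, mem_image] at hu
        rcases hu with ⟨i, hi, rfl⟩ | ⟨i, hi, rfl⟩ <;> rfl
      · intro u hu
        simp only [mem_union, mem_image] at hu
        rcases hu with ⟨i, hi, rfl⟩ | ⟨i, hi, rfl⟩ <;> simp
      · intro u hu
        simp only [mem_union, mem_image] at hu
        rcases hu with ⟨i, hi, rfl⟩ | ⟨i, hi, rfl⟩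
        · exact Or.inl (clique_adj G (by simp))
        · exact Or.inl (clique_adj G (by simp))
    · calc _ ≤ (D.image (fun i => Sum.inl (Sum.inl i) : α → (α ⊕ α) ⊕ (α ⊕ α))).card
            + (D.image (fun i => Sum.inl (Sum.inr i) : α → (α ⊕ α) ⊕ (α ⊕ α))).card :=
              card_union_le _ _
        _ ≤ D.card + D.card := Nat.add_le_add (card_image_le) (card_image_le)
        _ ≤ 2 * k := by omega
  · rintro ⟨D', ⟨hdom, -⟩, hcardD'⟩
    have hsplit : (D'.filter (fun d => isV d = true)).card
        + (D'.filter (fun d => ¬ isV d = true)).card = D'.card :=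
      Finset.card_filter_add_card_filter_not _
    have hVdom : Dominating G ((D'.filter (fun d => isV d = true)).image projα) := by
      intro i
      obtain ⟨d, hd, hdi⟩ := hdom (Sum.inr (Sum.inl i))
      rcases hdi with rfl | hadj
      · exact ⟨i, mem_image.mpr ⟨Sum.inr (Sum.inl i), mem_filter.mpr ⟨hd, rfl⟩, rfl⟩,
          Or.inl rfl⟩
      · obtain ⟨j, rfl, hij⟩ := adj_v2_elim G hadj
        exact ⟨j, mem_image.mpr ⟨_, mem_filter.mpr ⟨hd, rfl⟩, rfl⟩,
          hij.imp (fun h => h.symm) (fun h => h.symm)⟩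
    have hUdom : Dominating G ((D'.filter (fun d => ¬ isV d = true)).image projα) := by
      intro i
      obtain ⟨d, hd, hdi⟩ := hdom (Sum.inr (Sum.inr i))
      rcases hdi with rfl | hadj
      · exact ⟨i, mem_image.mpr ⟨Sum.inr (Sum.inr i), mem_filter.mpr ⟨hd, by simp [isV]⟩, rfl⟩,
          Or.inl rfl⟩
      · obtain ⟨j, rfl, hij⟩ := adj_u2_elim G hadj
        exact ⟨j, mem_image.mpr ⟨_, mem_filter.mpr ⟨hd, by simp [isV]⟩, rfl⟩,
          hij.imp (fun h => h.symm) (fun h => h.symm)⟩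
    by_cases hle : (D'.filter (fun d => isV d = true)).card ≤ k
    · exact ⟨_, hVdom, le_trans card_image_le hle⟩
    · exact ⟨_, hUdom, le_trans card_image_le (by omega)⟩
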